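/- Let ρ: Γ → GL(d,ℝ) be a p-dominated representation with constants C ≥ 1, λ > 0, and let ℓ₀ ∈ ℕ satisfy C e^{−λℓ₀} < 1. Then there exist constants ν ∈ (0,1), c₀ > 0, c₁ > 0 such that for all γ, η ∈ Γ with |γ| ≥ ℓ₀, |η| ≥ ℓ₀ and U_p(ρ(γ)) ≠ U_p(ρ(η)): d(γ,η) ≥ ν(|γ|+|η|) − c₀ − c₁ |log d(U_p(ρ(γ)), U_p(ρ(η)))|. -/

import Mathlib

noncomputable section

namespace Paper

abbrev Euc (d : ℕ) := EuclideanSpace ℝ (Fin d)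

/-- The `k`-th singular value (`1`-indexed) of a `d × d` real matrix, via
the Courant–Fischer max–min characterization. -/
noncomputable def sv {d : ℕ} (A : Matrix (Fin d) (Fin d) ℝ) (k : ℕ) : ℝ :=
  sSup {r : ℝ | ∃ P : Submodule ℝ (Euc d), Module.finrank ℝ P = k ∧
    ∀ v ∈ P, r * ‖v‖ ≤ ‖Matrix.toEuclideanLin A v‖}

/-- The operator norm `‖A‖ = σ₁(A)`. -/
noncomputable def opNorm {d : ℕ} (A : Matrix (Fin d) (Fin d) ℝ) : ℝ := sv A 1

/-- `A` has a gap of index `p`: `σ_p(A) > σ_{p+1}(A)`. -/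
def hasGap {d : ℕ} (A : Matrix (Fin d) (Fin d) ℝ) (p : ℕ) : Prop := sv A (p + 1) < sv A p

/-- `U_p(A)`: the sum of the eigenspaces of `A * A.transpose` corresponding to
eigenvalues `> σ_{p+1}(A)²`, i.e. the span of the `p` largest axes of the
image ellipsoid (when `A` has a gap of index `p`). -/
noncomputable def Uspace {d : ℕ} (A : Matrix (Fin d) (Fin d) ℝ) (p : ℕ) :
    Submodule ℝ (Euc d) :=
  ⨆ μ ∈ {μ : ℝ | sv A (p + 1) ^ 2 < μ},
    Module.End.eigenspace (Matrix.toEuclideanLin (A * A.transpose)) μ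

/-- `S_q(A) := U_q(A⁻¹)`. -/
noncomputable def Sspace {d : ℕ} (A : Matrix (Fin d) (Fin d) ℝ) (q : ℕ) :
    Submodule ℝ (Euc d) :=
  Uspace A⁻¹ q

/-- The angle `∠(w, P) = min { ∠(w,v) : v ∈ P \ {0} }` between a vector and a subspace. -/
noncomputable def angleVS {d : ℕ} (w : Euc d) (P : Submodule ℝ (Euc d)) : ℝ :=
  sInf {θ : ℝ | ∃ v ∈ P, v ≠ 0 ∧ θ = InnerProductGeometry.angle w v}

/-- The angle `∠(P,Q) = min { ∠(v,w) : v ∈ P \ {0}, w ∈ Q \ {0} }` between two subspaces. -/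
noncomputable def angleSS {d : ℕ} (P Q : Submodule ℝ (Euc d)) : ℝ :=
  sInf {θ : ℝ | ∃ v ∈ P, ∃ w ∈ Q, v ≠ 0 ∧ w ≠ 0 ∧ θ = InnerProductGeometry.angle v w}

/-- The distance `d(P,Q) := max_{w ∈ Q \ {0}} sin ∠(w,P)` on the Grassmannian. -/
noncomputable def grDist {d : ℕ} (P Q : Submodule ℝ (Euc d)) : ℝ :=
  sSup {s : ℝ | ∃ w ∈ Q, w ≠ 0 ∧ s = Real.sin (angleVS w P)}

/-- The action of `g ∈ GL(d,ℝ)` on subspaces of `ℝ^d`. -/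
noncomputable def smulSub {d : ℕ} (g : Matrix.GeneralLinearGroup (Fin d) ℝ)
    (P : Submodule ℝ (Euc d)) : Submodule ℝ (Euc d) :=
  P.map (Matrix.toEuclideanLin (g : Matrix (Fin d) (Fin d) ℝ))

section Group

variable {Γ : Type*} [Group Γ]

/-- Word length with respect to a generating set `S`. -/
noncomputable def wordLength (S : Set Γ) (γ : Γ) : ℕ :=
  sInf {n : ℕ | ∃ l : List Γ, l.length = n ∧ (∀ x ∈ l, x ∈ S) ∧ l.prod = γ}

/-- The word metric `d(γ,η) := |η⁻¹γ|`. -/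
noncomputable def wordDist (S : Set Γ) (γ η : Γ) : ℕ := wordLength S (η⁻¹ * γ)

/-- `S` is a finite symmetric generating set of `Γ`. -/
structure IsSymmGen (S : Set Γ) : Prop where
  finite : S.Finite
  symm : ∀ s ∈ S, s⁻¹ ∈ S
  gen : ∀ γ : Γ, ∃ l : List Γ, (∀ x ∈ l, x ∈ S) ∧ l.prod = γ

/-- The Gromov product `(x|y)_w` for the word metric, real-valued. -/
noncomputable def gromovProd (S : Set Γ) (x y w : Γ) : ℝ :=
  ((wordDist S x w : ℝ) + (wordDist S y w : ℝ) - (wordDist S x y : ℝ)) / 2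

/-- `Γ` is word-hyperbolic: Gromov's four point condition holds for the word metric. -/
def IsWordHyperbolic (S : Set Γ) : Prop :=
  ∃ δ : ℝ, 0 ≤ δ ∧ ∀ x y z w : Γ,
    min (gromovProd S x y w) (gromovProd S y z w) - δ ≤ gromovProd S x z w

/-- `ρ` is `p`-dominated, with constants `C`, `lam`:
`σ_{p+1}(ρ γ) / σ_p(ρ γ) ≤ C e^{-lam |γ|}` for all `γ`. -/
def IsDominatedRep {d : ℕ} (S : Set Γ) (ρ : Γ →* Matrix.GeneralLinearGroup (Fin d) ℝ)
    (p : ℕ) (C lam : ℝ) : Prop :=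
  ∀ γ : Γ, sv ((ρ γ : Matrix (Fin d) (Fin d) ℝ)) (p + 1) /
      sv ((ρ γ : Matrix (Fin d) (Fin d) ℝ)) p
    ≤ C * Real.exp (-lam * (wordLength S γ : ℝ))

/-- The limit set `M = ⋂_{n ≥ ℓ₀} closure {U_p(ρ(γ)) : |γ| ≥ n}`, the closure being
taken inside the Grassmannian `Gr_p(ℝ^d)` with the metric `grDist`. -/
def limitSet {d : ℕ} (S : Set Γ) (ρ : Γ →* Matrix.GeneralLinearGroup (Fin d) ℝ)
    (p ℓ₀ : ℕ) : Set (Submodule ℝ (Euc d)) :=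
  ⋂ n ∈ Set.Ici ℓ₀,
    {P : Submodule ℝ (Euc d) | Module.finrank ℝ P = p ∧
      ∀ ε > 0, ∃ γ : Γ, n ≤ wordLength S γ ∧
        grDist P (Uspace ((ρ γ : Matrix (Fin d) (Fin d) ℝ)) p) < ε}

end Group

end Paper

namespace Paper

open scoped LinearAlgebra.Projectivization

/-- `blockProd A n k = A_{n+k-1} ⋯ A_{n+1} A_n`. -/
noncomputable def blockProd {d : ℕ} (A : ℤ → Matrix (Fin d) (Fin d) ℝ) (n : ℤ) :
    ℕ → Matrix (Fin d) (Fin d) ℝ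
  | 0 => 1
  | k + 1 => A (n + k) * blockProd A n k

/-- `I ⊂ ℤ` is an interval. -/
def IsIntervalZ (I : Set ℤ) : Prop :=
  ∀ ⦃a b c : ℤ⦄, a ∈ I → c ∈ I → a ≤ b → b ≤ c → b ∈ I

/-- Membership in the set `𝒟(K,p,μ,c,I)` of dominated sequences of matrices. -/
def memD {d : ℕ} (K : ℝ) (p : ℕ) (μ c : ℝ) (I : Set ℤ)
    (A : ℤ → Matrix (Fin d) (Fin d) ℝ) : Prop :=
  (∀ i ∈ I, IsUnit (A i) ∧ opNorm (A i) ≤ K ∧ opNorm (A i)⁻¹ ≤ K) ∧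
  ∀ n m : ℤ, n ∈ I → m ∈ I → n ≤ m →
    sv (blockProd A n (m - n + 1).toNat) (p + 1) / sv (blockProd A n (m - n + 1).toNat) p
      ≤ c * Real.exp (-μ * ((m : ℝ) - (n : ℝ) + 1))

/-- The jacobian of `A` restricted to the subspace `P`, i.e. the factor by which
`A` scales volume on `P`; computed via the ratio of Gram determinants. -/
noncomputable def jac {d : ℕ} (A : Matrix (Fin d) (Fin d) ℝ) (P : Submodule ℝ (Euc d)) : ℝ :=
  Real.sqrt
    ((Matrix.of fun i j =>
        (inner ℝ (Matrix.toEuclideanLin A ((Module.finBasis ℝ P) i : Euc d))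
          (Matrix.toEuclideanLin A ((Module.finBasis ℝ P) j : Euc d)) : ℝ)).det /
     (Matrix.of fun i j =>
        (inner ℝ (((Module.finBasis ℝ P) i : Euc d)) (((Module.finBasis ℝ P) j : Euc d)) : ℝ)).det)

/-- `χ_k(A)`: the `k`-th largest absolute value of the complex eigenvalues of `A`
(1-indexed, repeated with multiplicity). -/
noncomputable def chi {d : ℕ} (A : Matrix (Fin d) (Fin d) ℝ) (k : ℕ) : ℝ :=
  (((A.map (fun x : ℝ => (x : ℂ))).charpoly.roots.map (fun z => ‖z‖)).sort
    (· ≤ ·)).getD (d - k) 0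

variable {Γ : Type*} [Group Γ]

/-- The translation length `ℓ(γ) = inf_η |η⁻¹ γ η|`. -/
noncomputable def transLength (S : Set Γ) (γ : Γ) : ℕ :=
  sInf {n : ℕ | ∃ η : Γ, wordLength S (η⁻¹ * γ * η) = n}

/-- An `(a,b)`-quasi-geodesic ray starting at the identity. -/
def IsQGRay (S : Set Γ) (a b : ℝ) (γ : ℕ → Γ) : Prop :=
  γ 0 = 1 ∧ ∀ n m : ℕ,
    a⁻¹ * |(n : ℝ) - (m : ℝ)| - b ≤ (wordDist S (γ n) (γ m) : ℝ) ∧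
    (wordDist S (γ n) (γ m) : ℝ) ≤ a * |(n : ℝ) - (m : ℝ)| + b

/-- The (positive) cone type of `γ`. -/
def coneType (S : Set Γ) (γ : Γ) : Set Γ :=
  {η : Γ | wordLength S (η * γ) = wordLength S η + wordLength S γ}

/-- An edge of the geodesic automaton: from `C₁` to `C₂`, labeled by `a`. -/
def IsEdge (S : Set Γ) (C₁ C₂ : Set Γ) (a : Γ) : Prop :=
  a ∈ S ∧ a ∈ C₁ ∧ ∃ γ : Γ, coneType S γ = C₁ ∧ coneType S (a * γ) = C₂

/-- A cone type is recurrent if it lies on a bi-infinite walk of the geodesic automaton. -/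
def IsRecurrentConeType (S : Set Γ) (C : Set Γ) : Prop :=
  ∃ (Cs : ℤ → Set Γ) (as : ℤ → Γ), C = Cs 0 ∧ ∀ n : ℤ, IsEdge S (Cs n) (Cs (n + 1)) (as n)

/-- Quotient topology on the projective space `ℙ(ℝ^d)`. -/
instance {d : ℕ} : TopologicalSpace (ℙ ℝ (Euc d)) :=
  inferInstanceAs (TopologicalSpace (Quotient (projectivizationSetoid ℝ (Euc d))))

lemma toEuclideanLin_injective {d : ℕ} (g : Matrix.GeneralLinearGroup (Fin d) ℝ) :
    Function.Injective (Matrix.toEuclideanLin (g : Matrix (Fin d) (Fin d) ℝ)) := by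
  intro x y hxy
  have h1 : ((g : Matrix (Fin d) (Fin d) ℝ)).mulVec ((WithLp.equiv 2 (Fin d → ℝ)) x)
      = ((g : Matrix (Fin d) (Fin d) ℝ)).mulVec ((WithLp.equiv 2 (Fin d → ℝ)) y) := by
    have h2 := congrArg (WithLp.equiv 2 (Fin d → ℝ)) hxy
    exact h2
  have hinj : Function.Injective ((g : Matrix (Fin d) (Fin d) ℝ)).mulVec :=
    Matrix.mulVec_injective_iff_isUnit.2 (Units.isUnit g)
  exact (WithLp.equiv 2 (Fin d → ℝ)).injective (hinj h1)

/-- The projective action of `g ∈ GL(d,ℝ)` on `ℙ(ℝ^d)`. -/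
noncomputable def projAction {d : ℕ} (g : Matrix.GeneralLinearGroup (Fin d) ℝ) :
    ℙ ℝ (Euc d) → ℙ ℝ (Euc d) :=
  Projectivization.map (Matrix.toEuclideanLin (g : Matrix (Fin d) (Fin d) ℝ))
    (toEuclideanLin_injective g)

/-- The set of points of `ℙ(ℝ^d)` corresponding to lines inside the subspace `P`
(the projectivization of `P`). -/
def projOf {d : ℕ} (P : Submodule ℝ (Euc d)) : Set (ℙ ℝ (Euc d)) :=
  {x | ∃ (v : Euc d) (hv : v ≠ 0), v ∈ P ∧ Projectivization.mk ℝ v hv = x}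

/-- A multicone of index `p`. -/
def IsMulticone {d : ℕ} (p : ℕ) (M : Set (ℙ ℝ (Euc d))) : Prop :=
  IsOpen M ∧
  (∃ P : Submodule ℝ (Euc d), Module.finrank ℝ P = p ∧ projOf P ⊆ M) ∧
  (∃ Q : Submodule ℝ (Euc d), Module.finrank ℝ Q = d - p ∧ Disjoint (projOf Q) M)

/-- A tame multicone: finitely many connected components, with pairwise disjoint closures. -/
def IsTame {d : ℕ} (M : Set (ℙ ℝ (Euc d))) : Prop :=
  {C : Set (ℙ ℝ (Euc d)) | ∃ x ∈ M, C = connectedComponentIn M x}.Finite ∧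
  ∀ x ∈ M, ∀ y ∈ M, connectedComponentIn M x ≠ connectedComponentIn M y →
    closure (connectedComponentIn M x) ∩ closure (connectedComponentIn M y) = ∅

/-- A strictly invariant family of multicones of index `p`, indexed by the
recurrent cone types. -/
def StrictlyInvariantFamily {d : ℕ} (S : Set Γ) (ρ : Γ →* Matrix.GeneralLinearGroup (Fin d) ℝ)
    (p : ℕ) (Mfam : Set Γ → Set (ℙ ℝ (Euc d))) : Prop :=
  (∀ C : Set Γ, IsRecurrentConeType S C → IsMulticone p (Mfam C)) ∧
  ∀ C₁ C₂ : Set Γ, ∀ a : Γ, IsRecurrentConeType S C₁ → IsRecurrentConeType S C₂ →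
    IsEdge S C₁ C₂ a →
    closure (projAction (ρ a) '' Mfam C₁) ⊆ interior (Mfam C₂)

end Paper

namespace Paper


section Aux
open Matrix

variable {d : ℕ}

/-! ### Operator norm of a matrix acting on Euclidean space -/

noncomputable def nrm (M : Matrix (Fin d) (Fin d) ℝ) : ℝ :=
  ‖LinearMap.toContinuousLinearMap (Matrix.toEuclideanLin M)‖

lemma EL_mul_apply (M N : Matrix (Fin d) (Fin d) ℝ) (v : Euc d) :
    Matrix.toEuclideanLin (M * N) v = Matrix.toEuclideanLin M (Matrix.toEuclideanLin N v) := by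
  apply (WithLp.equiv 2 _).injective
  simp [Matrix.mulVec_mulVec]

lemma EL_one_apply (v : Euc d) : Matrix.toEuclideanLin (1 : Matrix (Fin d) (Fin d) ℝ) v = v := by
  apply (WithLp.equiv 2 _).injective
  simp

lemma le_nrm_mul (M : Matrix (Fin d) (Fin d) ℝ) (v : Euc d) :
    ‖Matrix.toEuclideanLin M v‖ ≤ nrm M * ‖v‖ :=
  (LinearMap.toContinuousLinearMap (Matrix.toEuclideanLin M)).le_opNorm v

lemma nrm_nonneg (M : Matrix (Fin d) (Fin d) ℝ) : 0 ≤ nrm M := norm_nonneg _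

lemma nrm_mul_le (M N : Matrix (Fin d) (Fin d) ℝ) : nrm (M * N) ≤ nrm M * nrm N := by
  have h : LinearMap.toContinuousLinearMap (Matrix.toEuclideanLin (M * N)) =
      (LinearMap.toContinuousLinearMap (Matrix.toEuclideanLin M)).comp
        (LinearMap.toContinuousLinearMap (Matrix.toEuclideanLin N)) := by
    apply ContinuousLinearMap.coe_injective
    apply LinearMap.ext
    intro v
    exact EL_mul_apply M N v
  unfold nrm
  rw [h]
  exact ContinuousLinearMap.opNorm_comp_le _ _

lemma nrm_one (hd : 0 < d) : nrm (1 : Matrix (Fin d) (Fin d) ℝ) = 1 := by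
  have h : LinearMap.toContinuousLinearMap (Matrix.toEuclideanLin (1 : Matrix (Fin d) (Fin d) ℝ))
      = ContinuousLinearMap.id ℝ (Euc d) := by
    apply ContinuousLinearMap.coe_injective
    apply LinearMap.ext
    intro v
    exact EL_one_apply v
  have : Nontrivial (Euc d) := by
    refine ⟨EuclideanSpace.single ⟨0, hd⟩ 1, 0, ?_⟩
    intro h0
    have := congrFun (congrArg (WithLp.equiv 2 _) h0) ⟨0, hd⟩
    simp at this
  unfold nrm
  rw [h]
  exact ContinuousLinearMap.norm_id

lemma nrm_pos_of_isUnit {M : Matrix (Fin d) (Fin d) ℝ} (hd : 0 < d) (hM : IsUnit M) :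
    0 < nrm M := by
  rcases (nrm_nonneg M).lt_or_eq with h | h
  · exact h
  · exfalso
    have h0 : LinearMap.toContinuousLinearMap (Matrix.toEuclideanLin M) = 0 :=
      norm_eq_zero.mp h.symm
    have h1 : nrm ((1 : Matrix (Fin d) (Fin d) ℝ)) = 1 := nrm_one hd
    have hMi : IsUnit M.det := (Matrix.isUnit_iff_isUnit_det M).mp hM
    have h2 : (1 : Matrix (Fin d) (Fin d) ℝ) = M⁻¹ * M := (Matrix.nonsing_inv_mul M hMi).symm
    have h3 : nrm ((1 : Matrix (Fin d) (Fin d) ℝ)) ≤ nrm M⁻¹ * nrm M := by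
      rw [h2]; exact nrm_mul_le _ _
    rw [h1, ← h] at h3
    have := h3.trans_eq (mul_zero (nrm M⁻¹))
    linarith

/-! ### Basic properties of `sv` -/

def svSet (A : Matrix (Fin d) (Fin d) ℝ) (k : ℕ) : Set ℝ :=
  {r : ℝ | ∃ P : Submodule ℝ (Euc d), Module.finrank ℝ P = k ∧
    ∀ v ∈ P, r * ‖v‖ ≤ ‖Matrix.toEuclideanLin A v‖}

lemma sv_eq_sSup (A : Matrix (Fin d) (Fin d) ℝ) (k : ℕ) : sv A k = sSup (svSet A k) := rfl

lemma finrank_span_ob (b : OrthonormalBasis (Fin d) ℝ (Euc d)) (T : Finset (Fin d)) :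
    Module.finrank ℝ (Submodule.span ℝ (b '' (T : Set (Fin d)))) = T.card := by
  have h : (b '' (T : Set (Fin d))) = Set.range (⇑b ∘ (Subtype.val : T → Fin d)) := by
    ext x; simp
  rw [h, finrank_span_eq_card
    (b.orthonormal.linearIndependent.comp (Subtype.val : T → Fin d) Subtype.val_injective)]
  simp

lemma exists_finrank_eq {k : ℕ} (hk : k ≤ d) :
    ∃ P : Submodule ℝ (Euc d), Module.finrank ℝ P = k := by
  obtain ⟨T, -, hT⟩ := Finset.exists_subset_card_eq
    (s := (Finset.univ : Finset (Fin d))) (by simpa using hk)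
  exact ⟨Submodule.span ℝ ((EuclideanSpace.basisFun (Fin d) ℝ) '' (T : Set (Fin d))),
    by rw [finrank_span_ob, hT]⟩

lemma zero_mem_svSet (A : Matrix (Fin d) (Fin d) ℝ) {k : ℕ} (hk : k ≤ d) :
    (0 : ℝ) ∈ svSet A k := by
  obtain ⟨P, hP⟩ := exists_finrank_eq (d := d) hk
  exact ⟨P, hP, fun v _ => by simpa using norm_nonneg _⟩

lemma svSet_nonempty (A : Matrix (Fin d) (Fin d) ℝ) {k : ℕ} (hk : k ≤ d) :
    (svSet A k).Nonempty := ⟨0, zero_mem_svSet A hk⟩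

lemma mem_svSet_le {A : Matrix (Fin d) (Fin d) ℝ} {k : ℕ} (hk : 1 ≤ k) {r : ℝ}
    (hr : r ∈ svSet A k) : r ≤ nrm A := by
  obtain ⟨P, hP, h⟩ := hr
  have hPne : P ≠ ⊥ := by
    intro hbot
    rw [hbot] at hP
    rw [finrank_bot] at hP
    omega
  obtain ⟨v, hvP, hv0⟩ := Submodule.exists_mem_ne_zero_of_ne_bot hPne
  have h1 : r * ‖v‖ ≤ nrm A * ‖v‖ := (h v hvP).trans (le_nrm_mul A v)
  have hv : 0 < ‖v‖ := norm_pos_iff.mpr hv0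
  exact le_of_mul_le_mul_right h1 hv

lemma bddAbove_svSet (A : Matrix (Fin d) (Fin d) ℝ) {k : ℕ} (hk : 1 ≤ k) :
    BddAbove (svSet A k) := ⟨nrm A, fun _ hr => mem_svSet_le hk hr⟩

lemma le_sv {A : Matrix (Fin d) (Fin d) ℝ} {k : ℕ} (hk : 1 ≤ k) {r : ℝ}
    (hr : r ∈ svSet A k) : r ≤ sv A k :=
  le_csSup (bddAbove_svSet A hk) hr

lemma sv_le {A : Matrix (Fin d) (Fin d) ℝ} {k : ℕ} (hk : k ≤ d) {B : ℝ}
    (h : ∀ r ∈ svSet A k, r ≤ B) : sv A k ≤ B :=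
  csSup_le (svSet_nonempty A hk) h

lemma sv_nonneg (A : Matrix (Fin d) (Fin d) ℝ) {k : ℕ} (hk1 : 1 ≤ k) (hk : k ≤ d) :
    0 ≤ sv A k :=
  le_sv hk1 (zero_mem_svSet A hk)

lemma sv_pos {M : Matrix (Fin d) (Fin d) ℝ} (hd : 0 < d) (hM : IsUnit M) {k : ℕ}
    (hk1 : 1 ≤ k) (hk : k ≤ d) : 0 < sv M k := by
  have hMi : IsUnit M.det := (Matrix.isUnit_iff_isUnit_det M).mp hM
  have hnrm : 0 < nrm (M⁻¹) := by
    apply nrm_pos_of_isUnit hd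
    exact (Matrix.isUnit_nonsing_inv_iff).mpr hM
  have hmem : (nrm (M⁻¹))⁻¹ ∈ svSet M k := by
    obtain ⟨P, hP⟩ := exists_finrank_eq (d := d) hk
    refine ⟨P, hP, fun v _ => ?_⟩
    have h1 : ‖v‖ ≤ nrm (M⁻¹) * ‖Matrix.toEuclideanLin M v‖ := by
      have h2 : Matrix.toEuclideanLin (M⁻¹) (Matrix.toEuclideanLin M v) = v := by
        rw [← EL_mul_apply, Matrix.nonsing_inv_mul M hMi, EL_one_apply]
      calc ‖v‖ = ‖Matrix.toEuclideanLin (M⁻¹) (Matrix.toEuclideanLin M v)‖ := by rw [h2]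
        _ ≤ nrm (M⁻¹) * ‖Matrix.toEuclideanLin M v‖ := le_nrm_mul _ _
    rw [inv_mul_le_iff₀ hnrm] at *
    · linarith [h1]
  exact lt_of_lt_of_le (by positivity) (le_sv hk1 hmem)


/-! ### Spectral decomposition and quadratic forms -/

variable {M : Matrix (Fin d) (Fin d) ℝ} {b : OrthonormalBasis (Fin d) ℝ (Euc d)}
  {lam : Fin d → ℝ}

lemma quad_inner (M : Matrix (Fin d) (Fin d) ℝ) (v : Euc d) :
    (inner ℝ (Matrix.toEuclideanLin (M.transpose * M) v) v : ℝ)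
      = ‖Matrix.toEuclideanLin M v‖ ^ 2 := by
  rw [← real_inner_self_eq_norm_sq]
  have h1 : ∀ a c : Euc d, (inner ℝ a c : ℝ) = ⇑a ⬝ᵥ ⇑c := by
    intro a c; rw [PiLp.inner_apply]; simp [dotProduct, mul_comm]
  rw [h1, h1]
  show ((M.transpose * M) *ᵥ ⇑v) ⬝ᵥ ⇑v = (M *ᵥ ⇑v) ⬝ᵥ (M *ᵥ ⇑v)
  rw [← Matrix.mulVec_mulVec, Matrix.mulVec_transpose, ← Matrix.dotProduct_mulVec]

lemma ob_inner_self (b : OrthonormalBasis (Fin d) ℝ (Euc d)) (i : Fin d) :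
    (inner ℝ (b i) (b i) : ℝ) = 1 := by
  rw [real_inner_self_eq_norm_sq, b.orthonormal.1 i]
  norm_num

lemma inner_sum_ob (b : OrthonormalBasis (Fin d) ℝ (Euc d)) (T : Finset (Fin d))
    (f : Fin d → ℝ) (j : Fin d) :
    (inner ℝ (b j) (∑ i ∈ T, f i • b i) : ℝ) = if j ∈ T then f j else 0 := by
  rw [inner_sum]
  have : ∀ i ∈ T, (inner ℝ (b j) (f i • b i) : ℝ) = if i = j then f j else 0 := by
    intro i _
    by_cases hij : i = j
    · subst hij; rw [real_inner_smul_right, ob_inner_self]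
      simp
    · rw [real_inner_smul_right, b.orthonormal.2 (Ne.symm hij)]
      simp [hij]
  rw [Finset.sum_congr rfl this, Finset.sum_ite_eq' T j (fun _ => f j)]

lemma quad_eq (hEig : ∀ i, Matrix.toEuclideanLin (M.transpose * M) (b i) = lam i • b i)
    (v : Euc d) :
    ‖Matrix.toEuclideanLin M v‖ ^ 2 = ∑ i, lam i * (inner ℝ (b i) v : ℝ) ^ 2 := by
  rw [← quad_inner M v]
  have hTv : Matrix.toEuclideanLin (M.transpose * M) v
      = ∑ i, ((inner ℝ (b i) v : ℝ) * lam i) • b i := by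
    conv_lhs => rw [← b.sum_repr' v]
    rw [map_sum]
    refine Finset.sum_congr rfl (fun i _ => ?_)
    rw [LinearMap.map_smul, hEig i, smul_smul]
  rw [hTv, sum_inner]
  refine Finset.sum_congr rfl (fun i _ => ?_)
  rw [real_inner_smul_left]
  ring

lemma normsq_eq (b : OrthonormalBasis (Fin d) ℝ (Euc d)) (v : Euc d) :
    ‖v‖ ^ 2 = ∑ i, (inner ℝ (b i) v : ℝ) ^ 2 := by
  rw [← real_inner_self_eq_norm_sq]
  have hv : (inner ℝ v v : ℝ) = inner ℝ (∑ i, (inner ℝ (b i) v : ℝ) • b i) v := by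
    rw [b.sum_repr' v]
  rw [hv, sum_inner]
  refine Finset.sum_congr rfl (fun i _ => ?_)
  rw [real_inner_smul_left]
  ring

lemma lam_nonneg (hEig : ∀ i, Matrix.toEuclideanLin (M.transpose * M) (b i) = lam i • b i)
    (j : Fin d) : 0 ≤ lam j := by
  have h := quad_eq hEig (b j)
  have h2 : ∀ i : Fin d, lam i * (inner ℝ (b i) (b j) : ℝ) ^ 2
      = if i = j then lam j else 0 := by
    intro i
    by_cases hij : i = j
    · subst hij; rw [ob_inner_self]; simp
    · rw [b.orthonormal.2 hij]; simp [hij]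
  rw [Finset.sum_congr rfl (fun i _ => h2 i), Finset.sum_ite_eq' Finset.univ j
    (fun _ => lam j)] at h
  simp at h
  rw [← h]
  positivity

lemma mem_span_ob_inner_eq_zero {T : Finset (Fin d)} {z : Euc d}
    (hz : z ∈ Submodule.span ℝ (b '' (T : Set (Fin d)))) {j : Fin d} (hj : j ∉ T) :
    (inner ℝ (b j) z : ℝ) = 0 := by
  induction hz using Submodule.span_induction with
  | mem x hx =>
      obtain ⟨i, hiT, rfl⟩ := hx
      exact b.orthonormal.2 (fun hji => hj (hji ▸ hiT))
  | zero => simp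
  | add x y _ _ hx hy => rw [inner_add_right, hx, hy]; ring
  | smul c x _ hx => rw [real_inner_smul_right, hx]; ring

lemma sum_mem_span_ob (b : OrthonormalBasis (Fin d) ℝ (Euc d)) (T : Finset (Fin d))
    (f : Fin d → ℝ) :
    (∑ i ∈ T, f i • b i) ∈ Submodule.span ℝ (b '' (T : Set (Fin d))) :=
  Submodule.sum_mem _ (fun i hi => Submodule.smul_mem _ _
    (Submodule.subset_span ⟨i, hi, rfl⟩))

lemma normsq_eq_of_mem {T : Finset (Fin d)} {z : Euc d}
    (hz : z ∈ Submodule.span ℝ (b '' (T : Set (Fin d)))) :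
    ‖z‖ ^ 2 = ∑ i ∈ T, (inner ℝ (b i) z : ℝ) ^ 2 := by
  rw [normsq_eq b z]
  refine (Finset.sum_subset (Finset.subset_univ T) (fun i _ hi => ?_)).symm
  rw [mem_span_ob_inner_eq_zero hz hi]
  simp

lemma quad_le_of_mem (hEig : ∀ i, Matrix.toEuclideanLin (M.transpose * M) (b i) = lam i • b i)
    {T : Finset (Fin d)} {c : ℝ} (hc : ∀ i ∈ T, lam i ≤ c) {z : Euc d}
    (hz : z ∈ Submodule.span ℝ (b '' (T : Set (Fin d)))) :
    ‖Matrix.toEuclideanLin M z‖ ^ 2 ≤ c * ‖z‖ ^ 2 := by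
  rw [quad_eq hEig z, normsq_eq_of_mem hz]
  have h1 : ∑ i, lam i * (inner ℝ (b i) z : ℝ) ^ 2 = ∑ i ∈ T, lam i * (inner ℝ (b i) z : ℝ) ^ 2 := by
    refine (Finset.sum_subset (Finset.subset_univ T) (fun i _ hi => ?_)).symm
    rw [mem_span_ob_inner_eq_zero hz hi]; ring
  rw [h1, Finset.mul_sum]
  refine Finset.sum_le_sum (fun i hi => ?_)
  have := sq_nonneg (inner ℝ (b i) z : ℝ)
  nlinarith [hc i hi]

lemma quad_ge_of_mem (hEig : ∀ i, Matrix.toEuclideanLin (M.transpose * M) (b i) = lam i • b i)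
    {T : Finset (Fin d)} {c : ℝ} (hc : ∀ i ∈ T, c ≤ lam i) {z : Euc d}
    (hz : z ∈ Submodule.span ℝ (b '' (T : Set (Fin d)))) :
    c * ‖z‖ ^ 2 ≤ ‖Matrix.toEuclideanLin M z‖ ^ 2 := by
  rw [quad_eq hEig z, normsq_eq_of_mem hz]
  have h1 : ∑ i, lam i * (inner ℝ (b i) z : ℝ) ^ 2 = ∑ i ∈ T, lam i * (inner ℝ (b i) z : ℝ) ^ 2 := by
    refine (Finset.sum_subset (Finset.subset_univ T) (fun i _ hi => ?_)).symm
    rw [mem_span_ob_inner_eq_zero hz hi]; ring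
  rw [h1, Finset.mul_sum]
  refine Finset.sum_le_sum (fun i hi => ?_)
  have := sq_nonneg (inner ℝ (b i) z : ℝ)
  nlinarith [hc i hi]


/-! ### The spectral basis of `Mᵀ * M` -/

lemma herm (M : Matrix (Fin d) (Fin d) ℝ) : (M.transpose * M).IsHermitian := by
  have h := Matrix.isHermitian_conjTranspose_mul_self M
  rwa [Matrix.conjTranspose_eq_transpose_of_trivial] at h

noncomputable def specBasis (M : Matrix (Fin d) (Fin d) ℝ) :
    OrthonormalBasis (Fin d) ℝ (Euc d) := (herm M).eigenvectorBasis

noncomputable def specVal (M : Matrix (Fin d) (Fin d) ℝ) : Fin d → ℝ :=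
  (herm M).eigenvalues

lemma specEig (M : Matrix (Fin d) (Fin d) ℝ) (i : Fin d) :
    Matrix.toEuclideanLin (M.transpose * M) (specBasis M i)
      = specVal M i • specBasis M i := by
  apply (WithLp.equiv 2 _).injective
  simpa [Matrix.ofLp_toEuclideanLin_apply, specBasis, specVal] using (herm M).mulVec_eigenvectorBasis i

/-- The set of indices of "large" eigenvalues. -/
noncomputable def bigIdx (M : Matrix (Fin d) (Fin d) ℝ) (p : ℕ) : Finset (Fin d) :=
  Finset.univ.filter (fun i => sv M (p + 1) ^ 2 < specVal M i)

lemma le_of_sq_le_sq {a c : ℝ} (ha : 0 ≤ a) (hc : 0 ≤ c) (h : a ^ 2 ≤ c ^ 2) : a ≤ c := by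
  nlinarith

lemma exists_ne_zero_mem_inf {P W : Submodule ℝ (Euc d)}
    (h : d < Module.finrank ℝ P + Module.finrank ℝ W) :
    ∃ v : Euc d, v ∈ P ∧ v ∈ W ∧ v ≠ 0 := by
  have h1 := Submodule.finrank_sup_add_finrank_inf_eq P W
  have h2 : Module.finrank ℝ (P ⊔ W : Submodule ℝ (Euc d)) ≤ d := by
    have := Submodule.finrank_le (P ⊔ W : Submodule ℝ (Euc d))
    simpa [finrank_euclideanSpace] using this
  have h3 : 0 < Module.finrank ℝ (P ⊓ W : Submodule ℝ (Euc d)) := by omega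
  have h4 : (P ⊓ W : Submodule ℝ (Euc d)) ≠ ⊥ := by
    intro hbot
    rw [hbot, finrank_bot] at h3
    omega
  obtain ⟨v, hv, hv0⟩ := Submodule.exists_mem_ne_zero_of_ne_bot h4
  exact ⟨v, (Submodule.mem_inf.mp hv).1, (Submodule.mem_inf.mp hv).2, hv0⟩

lemma card_bigIdx_le {M : Matrix (Fin d) (Fin d) ℝ} {p : ℕ} (hpd : p + 1 ≤ d) :
    (bigIdx M p).card ≤ p := by
  by_contra hcon
  push_neg at hcon
  obtain ⟨T, hTsub, hTcard⟩ := Finset.exists_subset_card_eq hcon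
  have hTne : T.Nonempty := Finset.card_pos.mp (by omega)
  obtain ⟨j₀, hj₀T, hj₀min⟩ := T.exists_min_image (specVal M) hTne
  have hbig : ∀ i ∈ T, sv M (p + 1) ^ 2 < specVal M i := by
    intro i hi
    have := hTsub hi
    simpa [bigIdx] using this
  have hlam0 : 0 ≤ specVal M j₀ := lam_nonneg (specEig M) j₀
  have hmem : Real.sqrt (specVal M j₀) ∈ svSet M (p + 1) := by
    refine ⟨Submodule.span ℝ ((specBasis M) '' (T : Set (Fin d))), ?_, ?_⟩
    · rw [finrank_span_ob, hTcard]
    · intro v hv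
      have hq := quad_ge_of_mem (specEig M) (fun i hi => hj₀min i hi) hv
      refine le_of_sq_le_sq (by positivity) (norm_nonneg _) ?_
      have : (Real.sqrt (specVal M j₀)) ^ 2 = specVal M j₀ := Real.sq_sqrt hlam0
      nlinarith [hq]
  have h1 : Real.sqrt (specVal M j₀) ≤ sv M (p + 1) := le_sv (by omega) hmem
  have h2 : sv M (p + 1) < Real.sqrt (specVal M j₀) := by
    rw [show (p + 1 : ℕ) = p + 1 from rfl] at *
    have := hbig j₀ hj₀T
    have hnn : 0 ≤ sv M (p + 1) := sv_nonneg M (by omega) hpd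
    exact (Real.lt_sqrt hnn).mpr this
  linarith

lemma le_card_bigIdx {M : Matrix (Fin d) (Fin d) ℝ} {p : ℕ} (hp1 : 1 ≤ p) (hpd : p + 1 ≤ d)
    (hgap : sv M (p + 1) < sv M p) :
    p ≤ (bigIdx M p).card := by
  by_contra hcon
  push_neg at hcon
  have hle : sv M p ≤ sv M (p + 1) := by
    refine sv_le (by omega) (fun r hr => ?_)
    obtain ⟨P, hPrank, hP⟩ := hr
    have hWrank : Module.finrank ℝ
        (Submodule.span ℝ ((specBasis M) '' ((bigIdx M p)ᶜ : Finset (Fin d)))) =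
        d - (bigIdx M p).card := by
      rw [finrank_span_ob, Finset.card_compl, Fintype.card_fin]
    obtain ⟨v, hvP, hvW, hv0⟩ := exists_ne_zero_mem_inf (P := P)
      (W := Submodule.span ℝ ((specBasis M) '' ((bigIdx M p)ᶜ : Finset (Fin d))))
      (by rw [hPrank, hWrank]; have := card_bigIdx_le (M := M) hpd; omega)
    have hq := quad_le_of_mem (specEig M) (c := sv M (p+1) ^ 2)
      (fun i hi => by
        have : ¬ (sv M (p + 1) ^ 2 < specVal M i) := by
          intro hlt
          have : i ∈ bigIdx M p := by simp [bigIdx, hlt]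
          simp_all [Finset.mem_compl]
        linarith) hvW
    have hrv := hP v hvP
    have hvpos : 0 < ‖v‖ := norm_pos_iff.mpr hv0
    have hnn : 0 ≤ sv M (p + 1) := sv_nonneg M (by omega) hpd
    rcases le_or_gt r 0 with hr0 | hr0
    · linarith
    · have h1 : ‖Matrix.toEuclideanLin M v‖ ≤ sv M (p + 1) * ‖v‖ := by
        refine le_of_sq_le_sq (norm_nonneg _) (by positivity) ?_
        nlinarith [hq]
      have := hrv.trans h1
      exact le_of_mul_le_mul_right this hvpos
  linarith

lemma sv_sq_le_specVal {M : Matrix (Fin d) (Fin d) ℝ} {p : ℕ} (hp1 : 1 ≤ p) (hpd : p + 1 ≤ d)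
    (hgap : sv M (p + 1) < sv M p) {j : Fin d} (hj : j ∈ bigIdx M p) :
    sv M p ^ 2 ≤ specVal M j := by
  have hcard : (bigIdx M p).card = p :=
    le_antisymm (card_bigIdx_le hpd) (le_card_bigIdx hp1 hpd hgap)
  have hjbig : sv M (p + 1) ^ 2 < specVal M j := by simpa [bigIdx] using hj
  have hlamj : 0 ≤ specVal M j := lam_nonneg (specEig M) j
  have hle : sv M p ≤ Real.sqrt (specVal M j) := by
    refine sv_le (by omega) (fun r hr => ?_)
    obtain ⟨P, hPrank, hP⟩ := hr
    set T : Finset (Fin d) := insert j ((bigIdx M p)ᶜ) with hT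
    have hTcard : T.card = d - p + 1 := by
      rw [hT, Finset.card_insert_of_notMem (by simp [Finset.mem_compl, hj]),
        Finset.card_compl, Fintype.card_fin, hcard]
    have hWrank : Module.finrank ℝ (Submodule.span ℝ ((specBasis M) '' (T : Set (Fin d))))
        = d - p + 1 := by rw [finrank_span_ob, hTcard]
    obtain ⟨v, hvP, hvW, hv0⟩ := exists_ne_zero_mem_inf (P := P)
      (W := Submodule.span ℝ ((specBasis M) '' (T : Set (Fin d))))
      (by rw [hPrank, hWrank]; omega)
    have hc : ∀ i ∈ T, specVal M i ≤ specVal M j := by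
      intro i hi
      rw [hT, Finset.mem_insert] at hi
      rcases hi with rfl | hi
      · exact le_refl _
      · have hnot : ¬ (sv M (p + 1) ^ 2 < specVal M i) := by
          intro hlt
          have : i ∈ bigIdx M p := by simp [bigIdx, hlt]
          simp_all [Finset.mem_compl]
        linarith
    have hq := quad_le_of_mem (specEig M) (c := specVal M j) hc hvW
    have hrv := hP v hvP
    have hvpos : 0 < ‖v‖ := norm_pos_iff.mpr hv0
    rcases le_or_gt r 0 with hr0 | hr0
    · have : 0 ≤ Real.sqrt (specVal M j) := Real.sqrt_nonneg _
      linarith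
    · have h1 : ‖Matrix.toEuclideanLin M v‖ ≤ Real.sqrt (specVal M j) * ‖v‖ := by
        refine le_of_sq_le_sq (norm_nonneg _) (by positivity) ?_
        have hsq : (Real.sqrt (specVal M j)) ^ 2 = specVal M j := Real.sq_sqrt hlamj
        nlinarith [hq]
      have := hrv.trans h1
      exact le_of_mul_le_mul_right this hvpos
  have hnn : 0 ≤ sv M p := sv_nonneg M hp1 (by omega)
  nlinarith [Real.sq_sqrt hlamj, hle]

lemma card_bigIdx_eq {M : Matrix (Fin d) (Fin d) ℝ} {p : ℕ} (hp1 : 1 ≤ p) (hpd : p + 1 ≤ d)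
    (hgap : sv M (p + 1) < sv M p) : (bigIdx M p).card = p :=
  le_antisymm (card_bigIdx_le hpd) (le_card_bigIdx hp1 hpd hgap)


/-! ### Characterization of `Uspace` -/

noncomputable def ELe {M : Matrix (Fin d) (Fin d) ℝ} (hM : IsUnit M) : Euc d ≃ₗ[ℝ] Euc d :=
  LinearEquiv.ofLinear (Matrix.toEuclideanLin M) (Matrix.toEuclideanLin M⁻¹)
    (LinearMap.ext fun v => by
      rw [LinearMap.comp_apply, ← EL_mul_apply,
        Matrix.mul_nonsing_inv M ((Matrix.isUnit_iff_isUnit_det M).mp hM), EL_one_apply]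
      rfl)
    (LinearMap.ext fun v => by
      rw [LinearMap.comp_apply, ← EL_mul_apply,
        Matrix.nonsing_inv_mul M ((Matrix.isUnit_iff_isUnit_det M).mp hM), EL_one_apply]
      rfl)

lemma ELe_coe {M : Matrix (Fin d) (Fin d) ℝ} (hM : IsUnit M) :
    ((ELe hM : Euc d ≃ₗ[ℝ] Euc d) : Euc d →ₗ[ℝ] Euc d) = Matrix.toEuclideanLin M := rfl

lemma eigenspace_mul_transpose {M : Matrix (Fin d) (Fin d) ℝ} (hM : IsUnit M) (μ : ℝ) :
    Module.End.eigenspace (Matrix.toEuclideanLin (M * M.transpose)) μ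
      = Submodule.map (Matrix.toEuclideanLin M)
          (Module.End.eigenspace (Matrix.toEuclideanLin (M.transpose * M)) μ) := by
  have hdet := (Matrix.isUnit_iff_isUnit_det M).mp hM
  ext w
  constructor
  · intro hw
    rw [Module.End.mem_eigenspace_iff] at hw
    refine ⟨Matrix.toEuclideanLin M⁻¹ w, ?_, ?_⟩
    · rw [SetLike.mem_coe, Module.End.mem_eigenspace_iff]
      rw [← EL_mul_apply, ← LinearMap.map_smul, ← hw, ← EL_mul_apply]
      congr 1
      rw [Matrix.mul_assoc, Matrix.mul_nonsing_inv M hdet, Matrix.mul_one,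
        ← Matrix.mul_assoc, Matrix.nonsing_inv_mul M hdet, Matrix.one_mul]
    · rw [← EL_mul_apply, Matrix.mul_nonsing_inv M hdet, EL_one_apply]
  · rintro ⟨z, hz, rfl⟩
    rw [SetLike.mem_coe, Module.End.mem_eigenspace_iff] at hz
    rw [Module.End.mem_eigenspace_iff]
    rw [← EL_mul_apply, Matrix.mul_assoc, EL_mul_apply, hz, LinearMap.map_smul]

lemma iSup_eigenspace_eq (M : Matrix (Fin d) (Fin d) ℝ) (p : ℕ) :
    (⨆ μ ∈ {μ : ℝ | sv M (p + 1) ^ 2 < μ},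
        Module.End.eigenspace (Matrix.toEuclideanLin (M.transpose * M)) μ)
      = Submodule.span ℝ ((specBasis M) '' ((bigIdx M p : Finset (Fin d)) : Set (Fin d))) := by
  apply le_antisymm
  · refine iSup₂_le (fun μ hμ => ?_)
    intro v hv
    rw [Module.End.mem_eigenspace_iff] at hv
    have hsym := Matrix.isHermitian_iff_isSymmetric.mp (herm M)
    have hcoord : ∀ i : Fin d, i ∉ bigIdx M p → (inner ℝ ((specBasis M) i) v : ℝ) = 0 := by
      intro i hi
      have h1 : (inner ℝ ((specBasis M) i) (Matrix.toEuclideanLin (M.transpose * M) v) : ℝ)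
          = μ * (inner ℝ ((specBasis M) i) v : ℝ) := by
        rw [hv, real_inner_smul_right]
      have h2 : (inner ℝ ((specBasis M) i) (Matrix.toEuclideanLin (M.transpose * M) v) : ℝ)
          = specVal M i * (inner ℝ ((specBasis M) i) v : ℝ) := by
        rw [← hsym ((specBasis M) i) v, specEig, real_inner_smul_left]
      have hne : specVal M i ≠ μ := by
        have : ¬ (sv M (p + 1) ^ 2 < specVal M i) := by
          intro hlt
          exact hi (by simp [bigIdx, hlt])
        have hμ' : sv M (p + 1) ^ 2 < μ := hμ
        intro heq
        rw [heq] at this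
        exact this hμ'
      by_contra hc0
      apply hne
      have := h1.symm.trans h2
      exact (mul_right_cancel₀ hc0 this).symm
    have hvsum : v = ∑ i ∈ bigIdx M p, (inner ℝ ((specBasis M) i) v : ℝ) • (specBasis M) i := by
      conv_lhs => rw [← (specBasis M).sum_repr' v]
      refine (Finset.sum_subset (Finset.subset_univ _) (fun i _ hi => ?_)).symm
      rw [hcoord i hi, zero_smul]
    rw [hvsum]
    exact sum_mem_span_ob _ _ _
  · rw [Submodule.span_le]
    rintro x ⟨i, hi, rfl⟩
    have hib : sv M (p + 1) ^ 2 < specVal M i := by simpa [bigIdx] using hi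
    have : (specBasis M) i ∈ Module.End.eigenspace
        (Matrix.toEuclideanLin (M.transpose * M)) (specVal M i) :=
      Module.End.mem_eigenspace_iff.mpr (specEig M i)
    exact le_iSup₂ (f := fun μ _ => Module.End.eigenspace
      (Matrix.toEuclideanLin (M.transpose * M)) μ) (specVal M i) hib this

lemma Uspace_eq {M : Matrix (Fin d) (Fin d) ℝ} (hM : IsUnit M) (p : ℕ) :
    Uspace M p = Submodule.map (Matrix.toEuclideanLin M)
      (Submodule.span ℝ ((specBasis M) '' ((bigIdx M p : Finset (Fin d)) : Set (Fin d)))) := by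
  unfold Uspace
  rw [← iSup_eigenspace_eq M p]
  simp_rw [eigenspace_mul_transpose hM, Submodule.map_iSup]

lemma finrank_Uspace {M : Matrix (Fin d) (Fin d) ℝ} (hM : IsUnit M) {p : ℕ} (hp1 : 1 ≤ p)
    (hpd : p + 1 ≤ d) (hgap : sv M (p + 1) < sv M p) :
    Module.finrank ℝ (Uspace M p) = p := by
  rw [Uspace_eq hM p, ← ELe_coe hM, LinearEquiv.finrank_map_eq, finrank_span_ob,
    card_bigIdx_eq hp1 hpd hgap]

lemma Uspace_ne_bot {M : Matrix (Fin d) (Fin d) ℝ} (hM : IsUnit M) {p : ℕ} (hp1 : 1 ≤ p)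
    (hpd : p + 1 ≤ d) (hgap : sv M (p + 1) < sv M p) :
    Uspace M p ≠ ⊥ := by
  intro h
  have := finrank_Uspace hM hp1 hpd hgap
  rw [h, finrank_bot] at this
  omega


/-! ### Comparison of singular values and the approximation lemma -/

lemma ELe_symm_coe {M : Matrix (Fin d) (Fin d) ℝ} (hM : IsUnit M) :
    (((ELe hM).symm : Euc d ≃ₗ[ℝ] Euc d) : Euc d →ₗ[ℝ] Euc d)
      = Matrix.toEuclideanLin M⁻¹ := rfl

lemma sv_le_comp {A k : Matrix (Fin d) (Fin d) ℝ} (hk : IsUnit k) {p : ℕ}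
    (hp1 : 1 ≤ p) (hpd : p ≤ d) :
    sv A p ≤ nrm k⁻¹ * sv (A * k) p := by
  have hd : 0 < d := by omega
  have hki : IsUnit (k⁻¹ : Matrix (Fin d) (Fin d) ℝ) := (Matrix.isUnit_nonsing_inv_iff).mpr hk
  have hnrm : 0 < nrm (k⁻¹ : Matrix (Fin d) (Fin d) ℝ) := nrm_pos_of_isUnit hd hki
  have hsvnn : 0 ≤ sv (A * k) p := sv_nonneg _ hp1 hpd
  refine sv_le hpd (fun r hr => ?_)
  obtain ⟨P, hPrank, hP⟩ := hr
  rcases le_or_gt r 0 with hr0 | hr0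
  · nlinarith
  · have hmem : r / nrm (k⁻¹ : Matrix (Fin d) (Fin d) ℝ) ∈ svSet (A * k) p := by
      refine ⟨Submodule.map ((((ELe hk).symm : Euc d ≃ₗ[ℝ] Euc d)) : Euc d →ₗ[ℝ] Euc d) P, ?_, ?_⟩
      · rw [LinearEquiv.finrank_map_eq]; exact hPrank
      · rintro v ⟨u, huP, rfl⟩
        show r / nrm (k⁻¹ : Matrix (Fin d) (Fin d) ℝ) * ‖((ELe hk).symm u : Euc d)‖
          ≤ ‖Matrix.toEuclideanLin (A * k) ((ELe hk).symm u)‖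
        have h1 : Matrix.toEuclideanLin (A * k) ((ELe hk).symm u)
            = Matrix.toEuclideanLin A u := by
          rw [EL_mul_apply]
          congr 1
          exact (ELe hk).apply_symm_apply u
        have h2 : ‖((ELe hk).symm u : Euc d)‖ ≤ nrm (k⁻¹ : Matrix (Fin d) (Fin d) ℝ) * ‖u‖ := by
          have : ((ELe hk).symm u : Euc d) = Matrix.toEuclideanLin k⁻¹ u := rfl
          rw [this]
          exact le_nrm_mul _ _
        rw [h1]
        have h3 := hP u huP
        calc r / nrm (k⁻¹ : Matrix (Fin d) (Fin d) ℝ) * ‖((ELe hk).symm u : Euc d)‖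
            ≤ r / nrm (k⁻¹ : Matrix (Fin d) (Fin d) ℝ)
              * (nrm (k⁻¹ : Matrix (Fin d) (Fin d) ℝ) * ‖u‖) := by
              apply mul_le_mul_of_nonneg_left h2 (by positivity)
          _ = r * ‖u‖ := by rw [← mul_assoc, div_mul_cancel₀ r hnrm.ne']
          _ ≤ ‖Matrix.toEuclideanLin A u‖ := h3
    have := le_sv hp1 hmem
    calc r = nrm (k⁻¹ : Matrix (Fin d) (Fin d) ℝ)
        * (r / nrm (k⁻¹ : Matrix (Fin d) (Fin d) ℝ)) := by
          rw [mul_comm, div_mul_cancel₀ r hnrm.ne']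
      _ ≤ nrm (k⁻¹ : Matrix (Fin d) (Fin d) ℝ) * sv (A * k) p := by
          apply mul_le_mul_of_nonneg_left this (le_of_lt hnrm)

lemma approx_lemma {A k : Matrix (Fin d) (Fin d) ℝ} (hA : IsUnit A) (hk : IsUnit k)
    {p : ℕ} (hp1 : 1 ≤ p) (hpd : p + 1 ≤ d)
    (hgapA : sv A (p + 1) < sv A p) (hgapB : sv (A * k) (p + 1) < sv (A * k) p)
    {w : Euc d} (hw : w ∈ Uspace (A * k) p) (hw1 : ‖w‖ = 1) :
    ∃ u ∈ Uspace A p, ‖w - u‖ ≤ sv A (p + 1) / sv A p * (nrm k * nrm k⁻¹) := by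
  have hd : 0 < d := by omega
  have hAk : IsUnit (A * k) := hA.mul hk
  rw [Uspace_eq hAk p] at hw
  obtain ⟨z, hz, hzw⟩ := Submodule.mem_map.mp hw
  -- size of z
  have hq1 := quad_ge_of_mem (specEig (A * k)) (c := sv (A * k) p ^ 2)
    (fun i hi => sv_sq_le_specVal hp1 hpd hgapB hi) hz
  rw [hzw, hw1] at hq1
  have hsB : 0 < sv (A * k) p := sv_pos hd hAk hp1 (by omega)
  have hzn : sv (A * k) p * ‖z‖ ≤ 1 := by
    refine le_of_sq_le_sq (by positivity) one_pos.le ?_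
    nlinarith [hq1]
  -- the vector y and its decomposition
  set y : Euc d := Matrix.toEuclideanLin k z with hy
  set c : Fin d → ℝ := fun i => (inner ℝ ((specBasis A) i) y : ℝ) with hc
  set yG : Euc d := ∑ i ∈ bigIdx A p, c i • (specBasis A) i with hyG
  set yL : Euc d := ∑ i ∈ (bigIdx A p)ᶜ, c i • (specBasis A) i with hyL
  have hsum : yG + yL = y := by
    rw [hyG, hyL, Finset.sum_add_sum_compl]
    exact (specBasis A).sum_repr' y
  have huU : Matrix.toEuclideanLin A yG ∈ Uspace A p := by
    rw [Uspace_eq hA p]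
    exact ⟨yG, sum_mem_span_ob _ _ _, rfl⟩
  have hwy : w = Matrix.toEuclideanLin A y := by
    rw [← hzw, EL_mul_apply]
  -- the error term
  have herr : w - Matrix.toEuclideanLin A yG = Matrix.toEuclideanLin A yL := by
    rw [hwy, ← LinearMap.map_sub]
    congr 1
    rw [← hsum]
    abel
  have hyLmem : yL ∈ Submodule.span ℝ
      ((specBasis A) '' (((bigIdx A p)ᶜ : Finset (Fin d)) : Set (Fin d))) :=
    sum_mem_span_ob _ _ _
  have hq2 := quad_le_of_mem (specEig A) (c := sv A (p + 1) ^ 2)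
    (fun i hi => by
      have : ¬ (sv A (p + 1) ^ 2 < specVal A i) := by
        intro hlt
        have : i ∈ bigIdx A p := by simp [bigIdx, hlt]
        simp_all [Finset.mem_compl]
      linarith) hyLmem
  -- ‖yL‖ ≤ ‖y‖
  have hyLy : ‖yL‖ ≤ ‖y‖ := by
    refine le_of_sq_le_sq (norm_nonneg _) (norm_nonneg _) ?_
    rw [normsq_eq_of_mem hyLmem, normsq_eq (specBasis A) y]
    have hcoord : ∀ i ∈ (bigIdx A p)ᶜ, (inner ℝ ((specBasis A) i) yL : ℝ) ^ 2
        = (inner ℝ ((specBasis A) i) y : ℝ) ^ 2 := by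
      intro i hi
      rw [hyL, inner_sum_ob (specBasis A) _ c i, if_pos hi]
    rw [Finset.sum_congr rfl hcoord]
    refine Finset.sum_le_sum_of_subset_of_nonneg (Finset.subset_univ _) (fun i _ _ => sq_nonneg _)
  -- assemble
  have hsvnn : 0 ≤ sv A (p + 1) := sv_nonneg _ (by omega) hpd
  have hsA : 0 < sv A p := sv_pos hd hA hp1 (by omega)
  have herrnorm : ‖w - Matrix.toEuclideanLin A yG‖ ≤ sv A (p + 1) * ‖y‖ := by
    rw [herr]
    refine le_of_sq_le_sq (norm_nonneg _) (by positivity) ?_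
    calc ‖Matrix.toEuclideanLin A yL‖ ^ 2 ≤ sv A (p + 1) ^ 2 * ‖yL‖ ^ 2 := hq2
      _ ≤ (sv A (p + 1) * ‖y‖) ^ 2 := by
          have h := mul_self_le_mul_self (norm_nonneg yL) hyLy
          have h2 := sq_nonneg (sv A (p + 1))
          nlinarith [h, h2]
  have hyz : ‖y‖ ≤ nrm k * ‖z‖ := le_nrm_mul k z
  have hcomp : sv A p ≤ nrm k⁻¹ * sv (A * k) p := sv_le_comp hk hp1 (by omega)
  have hnk : 0 ≤ nrm k := nrm_nonneg k
  have hnki : 0 ≤ nrm k⁻¹ := nrm_nonneg _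
  refine ⟨Matrix.toEuclideanLin A yG, huU, ?_⟩
  have hyb : ‖y‖ * sv A p ≤ nrm k * nrm k⁻¹ := by
    have h1 : ‖y‖ * sv (A * k) p ≤ nrm k := by
      calc ‖y‖ * sv (A * k) p ≤ (nrm k * ‖z‖) * sv (A * k) p := by
            apply mul_le_mul_of_nonneg_right hyz hsB.le
        _ = nrm k * (sv (A * k) p * ‖z‖) := by ring
        _ ≤ nrm k * 1 := by apply mul_le_mul_of_nonneg_left hzn hnk
        _ = nrm k := mul_one _
    calc ‖y‖ * sv A p ≤ ‖y‖ * (nrm k⁻¹ * sv (A * k) p) := by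
          apply mul_le_mul_of_nonneg_left hcomp (norm_nonneg y)
      _ = (‖y‖ * sv (A * k) p) * nrm k⁻¹ := by ring
      _ ≤ nrm k * nrm k⁻¹ := by apply mul_le_mul_of_nonneg_right h1 hnki
  calc ‖w - Matrix.toEuclideanLin A yG‖ ≤ sv A (p + 1) * ‖y‖ := herrnorm
    _ ≤ sv A (p + 1) / sv A p * (nrm k * nrm k⁻¹) := by
        rw [div_mul_eq_mul_div, le_div_iff₀ hsA]
        calc sv A (p + 1) * ‖y‖ * sv A p = sv A (p + 1) * (‖y‖ * sv A p) := by ring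
          _ ≤ sv A (p + 1) * (nrm k * nrm k⁻¹) := by
              apply mul_le_mul_of_nonneg_left hyb hsvnn


/-! ### Angles and the Grassmannian distance -/

lemma norm_inv_smul {E : Type*} [NormedAddCommGroup E] [NormedSpace ℝ E] {v : E}
    (hv : v ≠ 0) : ‖(‖v‖⁻¹ • v : E)‖ = 1 := by
  have h : 0 < ‖v‖ := norm_pos_iff.mpr hv
  rw [norm_smul, Real.norm_eq_abs, abs_of_pos (inv_pos.mpr h), inv_mul_cancel₀ h.ne']

open InnerProductGeometry in
lemma angleVS_nonneg (w : Euc d) (P : Submodule ℝ (Euc d)) : 0 ≤ angleVS w P := by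
  apply Real.sInf_nonneg
  rintro θ ⟨v, hv, hv0, rfl⟩
  exact angle_nonneg w v

open InnerProductGeometry in
lemma angleVS_bddBelow (w : Euc d) (P : Submodule ℝ (Euc d)) :
    BddBelow {θ : ℝ | ∃ v ∈ P, v ≠ 0 ∧ θ = InnerProductGeometry.angle w v} := by
  refine ⟨0, ?_⟩
  rintro θ ⟨v, hv, hv0, rfl⟩
  exact angle_nonneg w v

lemma angleVS_le_angle {w v : Euc d} {P : Submodule ℝ (Euc d)} (hv : v ∈ P) (hv0 : v ≠ 0) :
    angleVS w P ≤ InnerProductGeometry.angle w v :=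
  csInf_le (angleVS_bddBelow w P) ⟨v, hv, hv0, rfl⟩

open InnerProductGeometry in
lemma angleVS_le_pi_div_two {P : Submodule ℝ (Euc d)} (hP : P ≠ ⊥) (w : Euc d) :
    angleVS w P ≤ Real.pi / 2 := by
  obtain ⟨v, hvP, hv0⟩ := Submodule.exists_mem_ne_zero_of_ne_bot hP
  rcases le_or_gt (angle w v) (Real.pi / 2) with h | h
  · exact (angleVS_le_angle hvP hv0).trans h
  · have h1 : angle w (-v) = Real.pi - angle w v := angle_neg_right w v
    have h2 := angleVS_le_angle (w := w) (Submodule.neg_mem P hvP) (neg_ne_zero.mpr hv0)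
    rw [h1] at h2
    linarith

open InnerProductGeometry in
lemma angleVS_pos {P : Submodule ℝ (Euc d)} (hP : P ≠ ⊥) {w : Euc d} (hw : w ∉ P) :
    0 < angleVS w P := by
  have hw0 : w ≠ 0 := fun h => hw (h ▸ P.zero_mem)
  -- the unit sphere of P is compact and nonempty
  set SP : Set (Euc d) := (P : Set (Euc d)) ∩ Metric.sphere (0 : Euc d) 1 with hSP
  have hcomp : IsCompact SP := by
    apply (isCompact_sphere (0 : Euc d) 1).inter_left
    exact Submodule.closed_of_finiteDimensional P
  have hne : SP.Nonempty := by
    obtain ⟨v, hvP, hv0⟩ := Submodule.exists_mem_ne_zero_of_ne_bot hP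
    refine ⟨‖v‖⁻¹ • v, Submodule.smul_mem P _ hvP, ?_⟩
    simpa [Metric.mem_sphere, dist_eq_norm] using norm_inv_smul hv0
  have hcont : ContinuousOn (fun v : Euc d => angle w v) SP := by
    intro v hv
    have hv0 : v ≠ 0 := by
      intro h
      have : ‖v‖ = 1 := by simpa [hSP] using hv.2
      rw [h] at this
      simp at this
    have h1 : ContinuousAt (fun v : Euc d => angle w v) v := by
      have h2 := continuousAt_angle (x := ((w, v) : Euc d × Euc d)) hw0 hv0
      exact h2.comp ((Continuous.prodMk continuous_const continuous_id).continuousAt)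
    exact h1.continuousWithinAt
  obtain ⟨v₀, hv₀SP, hv₀min⟩ := hcomp.exists_isMinOn hne hcont
  have hv₀P : v₀ ∈ P := hv₀SP.1
  have hv₀1 : ‖v₀‖ = 1 := by simpa [hSP] using hv₀SP.2
  have hv₀0 : v₀ ≠ 0 := by
    intro h; rw [h] at hv₀1; simp at hv₀1
  have hθ0 : 0 < angle w v₀ := by
    rcases (angle_nonneg w v₀).lt_or_eq with h | h
    · exact h
    · exfalso
      obtain ⟨-, r, hr, hv⟩ := angle_eq_zero_iff.mp h.symm
      apply hw
      have : w = r⁻¹ • v₀ := by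
        rw [hv, smul_smul, inv_mul_cancel₀ (ne_of_gt hr), one_smul]
      rw [this]
      exact Submodule.smul_mem P _ hv₀P
  refine lt_of_lt_of_le hθ0 ?_
  apply le_csInf
  · obtain ⟨v, hvP, hv0⟩ := Submodule.exists_mem_ne_zero_of_ne_bot hP
    exact ⟨angle w v, v, hvP, hv0, rfl⟩
  · rintro θ ⟨v, hvP, hv0, rfl⟩
    have hmem : ‖v‖⁻¹ • v ∈ SP := by
      refine ⟨Submodule.smul_mem P _ hvP, ?_⟩
      simpa [Metric.mem_sphere, dist_eq_norm] using norm_inv_smul hv0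
    have h1 := hv₀min hmem
    have h2 : angle w (‖v‖⁻¹ • v) = angle w v := by
      rw [angle_comm, angle_smul_left_of_pos _ _ (inv_pos.mpr (norm_pos_iff.mpr hv0)), angle_comm]
    simpa [h2] using h1

open InnerProductGeometry in
lemma angleVS_smul {w : Euc d} {c : ℝ} (hc : 0 < c) (P : Submodule ℝ (Euc d)) :
    angleVS (c • w) P = angleVS w P := by
  unfold angleVS
  congr 1
  ext θ
  constructor
  · rintro ⟨v, hv, hv0, rfl⟩
    exact ⟨v, hv, hv0, by rw [angle_smul_left_of_pos _ _ hc]⟩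
  · rintro ⟨v, hv, hv0, rfl⟩
    exact ⟨v, hv, hv0, by rw [angle_smul_left_of_pos _ _ hc]⟩

open InnerProductGeometry in
lemma sin_angleVS_le_of_close {P : Submodule ℝ (Euc d)} {a v : Euc d}
    (ha : ‖a‖ = 1) (hv : v ∈ P) (hvn : ‖v‖ = 1) (h : ‖a - v‖ ≤ 1) :
    Real.sin (angleVS a P) ≤ ‖a - v‖ := by
  have hv0 : v ≠ 0 := by intro h0; rw [h0] at hvn; simp at hvn
  set t : ℝ := (inner ℝ a v : ℝ) with hht
  have ht : ‖a - v‖ ^ 2 = 2 - 2 * t := by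
    rw [norm_sub_sq_real, ha, hvn]; ring
  have ht1 : t ≤ 1 := by nlinarith [sq_nonneg ‖a - v‖]
  have htpos : 0 ≤ t := by nlinarith [norm_nonneg (a - v)]
  have hangle : angle a v = Real.arccos t := by
    rw [InnerProductGeometry.angle, ha, hvn, mul_one, div_one, ← hht]
  have hθle : angle a v ≤ Real.pi / 2 := by
    rw [hangle]
    exact Real.arccos_le_pi_div_two.mpr htpos
  have hle : angleVS a P ≤ angle a v := angleVS_le_angle hv hv0
  have h0 : 0 ≤ angleVS a P := angleVS_nonneg a P
  have hmono : Real.sin (angleVS a P) ≤ Real.sin (angle a v) := by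
    rcases hle.lt_or_eq with hlt | heq
    · exact le_of_lt (Real.sin_lt_sin_of_lt_of_le_pi_div_two (by linarith [Real.pi_pos]) hθle hlt)
    · rw [heq]
  refine hmono.trans ?_
  rw [hangle, Real.sin_arccos]
  have h1 : 1 - t ^ 2 ≤ 2 - 2 * t := by nlinarith
  calc Real.sqrt (1 - t ^ 2) ≤ Real.sqrt (2 - 2 * t) := Real.sqrt_le_sqrt h1
    _ = Real.sqrt (‖a - v‖ ^ 2) := by rw [ht]
    _ = ‖a - v‖ := Real.sqrt_sq (norm_nonneg _)

lemma grSet_bddAbove (P Q : Submodule ℝ (Euc d)) :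
    BddAbove {s : ℝ | ∃ w ∈ Q, w ≠ 0 ∧ s = Real.sin (angleVS w P)} := by
  refine ⟨1, ?_⟩
  rintro s ⟨w, hw, hw0, rfl⟩
  exact Real.sin_le_one _

lemma grSet_nonempty {P Q : Submodule ℝ (Euc d)} (hQ : Q ≠ ⊥) :
    {s : ℝ | ∃ w ∈ Q, w ≠ 0 ∧ s = Real.sin (angleVS w P)}.Nonempty := by
  obtain ⟨w, hwQ, hw0⟩ := Submodule.exists_mem_ne_zero_of_ne_bot hQ
  exact ⟨Real.sin (angleVS w P), w, hwQ, hw0, rfl⟩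

lemma grDist_le_one {P Q : Submodule ℝ (Euc d)} (hQ : Q ≠ ⊥) : grDist P Q ≤ 1 :=
  csSup_le (grSet_nonempty hQ) (by rintro s ⟨w, hw, hw0, rfl⟩; exact Real.sin_le_one _)

lemma grDist_le_of_bound {P Q : Submodule ℝ (Euc d)} (hQ : Q ≠ ⊥) {B : ℝ}
    (h : ∀ w ∈ Q, w ≠ 0 → Real.sin (angleVS w P) ≤ B) : grDist P Q ≤ B :=
  csSup_le (grSet_nonempty hQ) (by rintro s ⟨w, hw, hw0, rfl⟩; exact h w hw hw0)

lemma grDist_pos {P Q : Submodule ℝ (Euc d)} (hP : P ≠ ⊥) (hQP : ¬ Q ≤ P) :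
    0 < grDist P Q := by
  obtain ⟨w, hwQ, hwP⟩ := SetLike.not_le_iff_exists.mp hQP
  have hw0 : w ≠ 0 := fun h => hwP (h ▸ P.zero_mem)
  have hpos : 0 < Real.sin (angleVS w P) := by
    apply Real.sin_pos_of_pos_of_lt_pi (angleVS_pos hP hwP)
    exact lt_of_le_of_lt (angleVS_le_pi_div_two hP w) (half_lt_self Real.pi_pos)
  exact lt_of_lt_of_le hpos (le_csSup (grSet_bddAbove P Q) ⟨w, hwQ, hw0, rfl⟩)

/-- Main geometric estimate: distance between the `U`-spaces of `A` and `A * k`. -/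
lemma grDist_Uspace_le {A k : Matrix (Fin d) (Fin d) ℝ} (hA : IsUnit A) (hk : IsUnit k)
    {p : ℕ} (hp1 : 1 ≤ p) (hpd : p + 1 ≤ d)
    (hgapA : sv A (p + 1) < sv A p) (hgapB : sv (A * k) (p + 1) < sv (A * k) p) :
    grDist (Uspace A p) (Uspace (A * k) p)
      ≤ 2 * (sv A (p + 1) / sv A p * (nrm k * nrm k⁻¹)) := by
  have hd : 0 < d := by omega
  have hAk : IsUnit (A * k) := hA.mul hk
  set ε : ℝ := sv A (p + 1) / sv A p * (nrm k * nrm k⁻¹) with hε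
  have hε0 : 0 ≤ ε := by
    have h1 : 0 ≤ sv A (p + 1) := sv_nonneg _ (by omega) hpd
    have h2 : 0 < sv A p := sv_pos hd hA hp1 (by omega)
    have h3 : 0 ≤ nrm k := nrm_nonneg k
    have h4 : 0 ≤ nrm k⁻¹ := nrm_nonneg _
    positivity
  have hQ : Uspace (A * k) p ≠ ⊥ := Uspace_ne_bot hAk hp1 hpd hgapB
  have hPbot : Uspace A p ≠ ⊥ := Uspace_ne_bot hA hp1 hpd hgapA
  rcases le_or_gt (1/2 : ℝ) ε with hbig | hsmall
  · calc grDist (Uspace A p) (Uspace (A * k) p) ≤ 1 := grDist_le_one hQ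
      _ ≤ 2 * ε := by linarith
  · apply grDist_le_of_bound hQ
    intro w hw hw0
    set a : Euc d := ‖w‖⁻¹ • w with haDef
    have ha1 : ‖a‖ = 1 := norm_inv_smul hw0
    have haQ : a ∈ Uspace (A * k) p := Submodule.smul_mem _ _ hw
    obtain ⟨u, huP, hu⟩ := approx_lemma hA hk hp1 hpd hgapA hgapB haQ ha1
    rw [← hε] at hu
    have hu0 : u ≠ 0 := by
      intro h0
      rw [h0, sub_zero, ha1] at hu
      linarith
    set v : Euc d := ‖u‖⁻¹ • u with hvDef
    have hvP : v ∈ Uspace A p := Submodule.smul_mem _ _ huP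
    have hv1 : ‖v‖ = 1 := norm_inv_smul hu0
    have huv : ‖u - v‖ ≤ ‖a - u‖ := by
      have h1 : u - v = (1 - ‖u‖⁻¹) • u := by
        rw [hvDef, sub_smul, one_smul]
      have hun : 0 < ‖u‖ := norm_pos_iff.mpr hu0
      have h2 : ‖u - v‖ = |1 - ‖u‖⁻¹| * ‖u‖ := by
        rw [h1, norm_smul, Real.norm_eq_abs]
      have h3 : |1 - ‖u‖⁻¹| * ‖u‖ = |‖u‖ - 1| := by
        rw [← abs_of_pos hun, ← abs_mul]
        congr 1
        field_simp
        rw [abs_of_pos hun]; ring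
      have h4 : |‖u‖ - 1| ≤ ‖u - a‖ := by
        rw [← ha1]
        exact abs_norm_sub_norm_le u a
      rw [h2, h3, ← norm_sub_rev a u] at *
      exact h4
    have hav : ‖a - v‖ ≤ 2 * ε := by
      calc ‖a - v‖ = ‖(a - u) + (u - v)‖ := by congr 1; abel
        _ ≤ ‖a - u‖ + ‖u - v‖ := norm_add_le _ _
        _ ≤ ε + ε := add_le_add hu (huv.trans hu)
        _ = 2 * ε := by ring
    have hsin : Real.sin (angleVS w (Uspace A p)) = Real.sin (angleVS a (Uspace A p)) := by
      rw [haDef, angleVS_smul (inv_pos.mpr (norm_pos_iff.mpr hw0))]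
    rw [hsin]
    calc Real.sin (angleVS a (Uspace A p)) ≤ ‖a - v‖ :=
        sin_angleVS_le_of_close ha1 hvP hv1 (by linarith)
      _ ≤ 2 * ε := hav


/-! ### Word length lemmas -/

section Word

variable {Γ : Type*} [Group Γ] {S : Set Γ}

lemma wordLength_spec (hS : IsSymmGen S) (γ : Γ) :
    ∃ l : List Γ, l.length = wordLength S γ ∧ (∀ x ∈ l, x ∈ S) ∧ l.prod = γ := by
  have hne : {n : ℕ | ∃ l : List Γ, l.length = n ∧ (∀ x ∈ l, x ∈ S) ∧ l.prod = γ}.Nonempty := by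
    obtain ⟨l, hl, hp⟩ := hS.gen γ
    exact ⟨l.length, l, rfl, hl, hp⟩
  exact Nat.sInf_mem hne

lemma wordLength_le {γ : Γ} {l : List Γ} (hl : ∀ x ∈ l, x ∈ S) (hp : l.prod = γ) :
    wordLength S γ ≤ l.length :=
  Nat.sInf_le ⟨l, rfl, hl, hp⟩

lemma wordLength_mul_le (hS : IsSymmGen S) (γ η : Γ) :
    wordLength S (γ * η) ≤ wordLength S γ + wordLength S η := by
  obtain ⟨l1, hlen1, hmem1, hprod1⟩ := wordLength_spec hS γ
  obtain ⟨l2, hlen2, hmem2, hprod2⟩ := wordLength_spec hS η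
  have h := wordLength_le (S := S) (γ := γ * η) (l := l1 ++ l2)
    (fun x hx => by rcases List.mem_append.mp hx with h | h; exacts [hmem1 x h, hmem2 x h])
    (by rw [List.prod_append, hprod1, hprod2])
  rwa [List.length_append, hlen1, hlen2] at h

lemma wordLength_inv_le (hS : IsSymmGen S) (γ : Γ) :
    wordLength S γ⁻¹ ≤ wordLength S γ := by
  obtain ⟨l, hlen, hmem, hprod⟩ := wordLength_spec hS γ
  have h := wordLength_le (S := S) (γ := γ⁻¹) (l := (l.map fun x => x⁻¹).reverse)
    (fun x hx => by
      rw [List.mem_reverse, List.mem_map] at hx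
      obtain ⟨a, ha, rfl⟩ := hx
      exact hS.symm a (hmem a ha))
    (by rw [← List.prod_inv_reverse, hprod])
  rwa [List.length_reverse, List.length_map, hlen] at h

lemma wordLength_inv (hS : IsSymmGen S) (γ : Γ) :
    wordLength S γ⁻¹ = wordLength S γ := by
  refine le_antisymm (wordLength_inv_le hS γ) ?_
  have := wordLength_inv_le hS γ⁻¹
  rwa [inv_inv] at this

lemma nrm_prod_le {d : ℕ} (hd : 0 < d) (ρ : Γ →* Matrix.GeneralLinearGroup (Fin d) ℝ)
    {K : ℝ} (hK1 : 1 ≤ K)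
    (hKS : ∀ s ∈ S, nrm ((ρ s : Matrix (Fin d) (Fin d) ℝ)) ≤ K) :
    ∀ l : List Γ, (∀ x ∈ l, x ∈ S) →
      nrm ((ρ l.prod : Matrix (Fin d) (Fin d) ℝ)) ≤ K ^ l.length := by
  intro l
  induction l with
  | nil =>
      intro _
      simp only [List.prod_nil, List.length_nil, pow_zero]
      rw [_root_.map_one ρ, Units.val_one, nrm_one hd]
  | cons a l ih =>
      intro h
      have h1 : ρ (a :: l).prod = ρ a * ρ l.prod := by rw [List.prod_cons, _root_.map_mul]
      have h2 : ((ρ (a :: l).prod : Matrix (Fin d) (Fin d) ℝ))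
          = (ρ a : Matrix (Fin d) (Fin d) ℝ) * (ρ l.prod : Matrix (Fin d) (Fin d) ℝ) := by
        rw [h1, Units.val_mul]
      rw [h2, List.length_cons, pow_succ']
      calc nrm ((ρ a : Matrix (Fin d) (Fin d) ℝ) * (ρ l.prod : Matrix (Fin d) (Fin d) ℝ))
          ≤ nrm (ρ a : Matrix (Fin d) (Fin d) ℝ) * nrm (ρ l.prod : Matrix (Fin d) (Fin d) ℝ) :=
            nrm_mul_le _ _
        _ ≤ K * K ^ l.length := by
            apply mul_le_mul (hKS a (h a List.mem_cons_self))
              (ih (fun x hx => h x (List.mem_cons_of_mem a hx))) (nrm_nonneg _)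
              (by linarith)
        _ = K * K ^ l.length := rfl

lemma nrm_rho_le {d : ℕ} (hd : 0 < d) (hS : IsSymmGen S)
    (ρ : Γ →* Matrix.GeneralLinearGroup (Fin d) ℝ)
    {K : ℝ} (hK1 : 1 ≤ K)
    (hKS : ∀ s ∈ S, nrm ((ρ s : Matrix (Fin d) (Fin d) ℝ)) ≤ K) (γ : Γ) :
    nrm ((ρ γ : Matrix (Fin d) (Fin d) ℝ)) ≤ K ^ wordLength S γ := by
  obtain ⟨l, hlen, hmem, hprod⟩ := wordLength_spec hS γ
  have := nrm_prod_le hd ρ hK1 hKS l hmem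
  rwa [hprod, hlen] at this

end Word

end Aux

set_option maxHeartbeats 2000000 in
/-- Lower bound for the word distance in terms of the distance of
the `U_p`-spaces. -/
theorem distance_lower_bound_lemma
    {d : ℕ} (hd : 2 ≤ d) (p : ℕ) (hp1 : 1 ≤ p) (hpd : p < d)
    {Γ : Type*} [Group Γ] (S : Set Γ) (hS : IsSymmGen S)
    (ρ : Γ →* Matrix.GeneralLinearGroup (Fin d) ℝ)
    (C lam : ℝ) (hC : 1 ≤ C) (hlam : 0 < lam)
    (hdom : IsDominatedRep S ρ p C lam)
    (ℓ₀ : ℕ) (hℓ₀ : C * Real.exp (-lam * (ℓ₀ : ℝ)) < 1) :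
    ∃ ν : ℝ, ν ∈ Set.Ioo (0:ℝ) 1 ∧ ∃ c₀ > (0:ℝ), ∃ c₁ > (0:ℝ),
      ∀ γ η : Γ, ℓ₀ ≤ wordLength S γ → ℓ₀ ≤ wordLength S η →
        Uspace ((ρ γ : Matrix (Fin d) (Fin d) ℝ)) p ≠
          Uspace ((ρ η : Matrix (Fin d) (Fin d) ℝ)) p →
        ν * ((wordLength S γ : ℝ) + (wordLength S η : ℝ)) - c₀ -
            c₁ * |Real.log (grDist (Uspace ((ρ γ : Matrix (Fin d) (Fin d) ℝ)) p)
              (Uspace ((ρ η : Matrix (Fin d) (Fin d) ℝ)) p))|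
          ≤ (wordDist S γ η : ℝ) := by
  classical
  have hd0 : 0 < d := by omega
  -- the norm constant K
  set Knrm : ℝ := max 1 (sSup ((fun g => nrm ((ρ g : Matrix (Fin d) (Fin d) ℝ))) '' S)) with hK
  have hK1 : 1 ≤ Knrm := le_max_left _ _
  have hKS : ∀ s ∈ S, nrm ((ρ s : Matrix (Fin d) (Fin d) ℝ)) ≤ Knrm := by
    intro s hs
    have hbdd : BddAbove ((fun g => nrm ((ρ g : Matrix (Fin d) (Fin d) ℝ))) '' S) :=
      (hS.finite.image _).bddAbove
    exact le_trans (le_csSup hbdd ⟨s, hs, rfl⟩) (le_max_right _ _)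
  set LK : ℝ := Real.log Knrm with hLK
  have hLK0 : 0 ≤ LK := Real.log_nonneg hK1
  set T : ℝ := lam + 2 * LK + 1 with hT
  have hT0 : 0 < T := by rw [hT]; linarith
  set c₁ : ℝ := 1 / T with hc₁
  have hc₁0 : 0 < c₁ := by rw [hc₁]; positivity
  have hc₁T : c₁ * T = 1 := by rw [hc₁]; field_simp
  set ν : ℝ := lam * c₁ / 2 with hν
  have hν0 : 0 < ν := by rw [hν]; positivity
  have hν1 : ν < 1 := by
    have h1 : ν + 2 * c₁ * LK ≤ 1 := by
      have h2 : ν + 2 * c₁ * LK = c₁ * (lam / 2 + 2 * LK) := by rw [hν]; ring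
      rw [h2, ← hc₁T]
      apply mul_le_mul_of_nonneg_left _ hc₁0.le
      rw [hT]; linarith
    nlinarith [mul_nonneg (mul_nonneg (by norm_num : (0:ℝ) ≤ 2) hc₁0.le) hLK0]
  have hlog2C0 : 0 ≤ Real.log (2 * C) := Real.log_nonneg (by linarith)
  have hc₀0 : 0 < 1 + c₁ * Real.log (2 * C) := by nlinarith [mul_nonneg hc₁0.le hlog2C0]
  refine ⟨ν, ⟨hν0, hν1⟩, 1 + c₁ * Real.log (2 * C), hc₀0, c₁, hc₁0, ?_⟩
  intro γ η hγ hη hne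
  -- matrices
  set A : Matrix (Fin d) (Fin d) ℝ := (ρ γ : Matrix (Fin d) (Fin d) ℝ) with hA
  set B : Matrix (Fin d) (Fin d) ℝ := (ρ η : Matrix (Fin d) (Fin d) ℝ) with hB
  set g : Γ := γ⁻¹ * η with hg
  set k : Matrix (Fin d) (Fin d) ℝ := (ρ g : Matrix (Fin d) (Fin d) ℝ) with hk
  have hBk : B = A * k := by
    rw [hA, hB, hk, ← Units.val_mul, ← _root_.map_mul]
    have : γ * (γ⁻¹ * η) = η := by group
    rw [hg, this]
  have hAu : IsUnit A := (ρ γ).isUnit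
  have hku : IsUnit k := (ρ g).isUnit
  have hBu : IsUnit B := (ρ η).isUnit
  -- spectral gaps
  have gap : ∀ θ : Γ, ℓ₀ ≤ wordLength S θ →
      sv ((ρ θ : Matrix (Fin d) (Fin d) ℝ)) (p + 1)
        < sv ((ρ θ : Matrix (Fin d) (Fin d) ℝ)) p := by
    intro θ hθ
    have h1 := hdom θ
    have hsvp : 0 < sv ((ρ θ : Matrix (Fin d) (Fin d) ℝ)) p :=
      sv_pos hd0 (ρ θ).isUnit hp1 (by omega)
    have h2 : sv ((ρ θ : Matrix (Fin d) (Fin d) ℝ)) (p + 1)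
        ≤ C * Real.exp (-lam * (wordLength S θ : ℝ))
          * sv ((ρ θ : Matrix (Fin d) (Fin d) ℝ)) p := (div_le_iff₀ hsvp).mp h1
    have h3 : C * Real.exp (-lam * (wordLength S θ : ℝ)) < 1 := by
      refine lt_of_le_of_lt ?_ hℓ₀
      apply mul_le_mul_of_nonneg_left _ (by linarith : (0:ℝ) ≤ C)
      apply Real.exp_le_exp.mpr
      have hcast : (ℓ₀ : ℝ) ≤ (wordLength S θ : ℝ) := Nat.cast_le.mpr hθ
      nlinarith [hlam]
    nlinarith [hsvp, h2, h3]
  have hgapA : sv A (p + 1) < sv A p := gap γ hγ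
  have hgapB' : sv B (p + 1) < sv B p := gap η hη
  have hgapB : sv (A * k) (p + 1) < sv (A * k) p := by rw [← hBk]; exact hgapB'
  -- the two spaces
  set P : Submodule ℝ (Euc d) := Uspace A p with hP
  set Q : Submodule ℝ (Euc d) := Uspace B p with hQ
  set n : ℕ := wordDist S γ η with hn
  have hgn : wordLength S g = n := by
    rw [hn]
    show wordLength S g = wordLength S (η⁻¹ * γ)
    rw [hg, show γ⁻¹ * η = (η⁻¹ * γ)⁻¹ by group]
    exact wordLength_inv hS _
  -- positivity of the distance
  have hrankP : Module.finrank ℝ P = p := finrank_Uspace hAu hp1 (by omega) hgapA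
  have hrankQ : Module.finrank ℝ Q = p := finrank_Uspace hBu hp1 (by omega) hgapB'
  have hPbot : P ≠ ⊥ := Uspace_ne_bot hAu hp1 (by omega) hgapA
  have hD0 : 0 < grDist P Q := grDist_pos hPbot (by
    intro hle
    exact hne (Submodule.eq_of_le_of_finrank_eq hle (by rw [hrankP, hrankQ])).symm)
  -- bounds on the norms of k and k⁻¹
  have hnk : nrm k ≤ Knrm ^ n := by
    rw [← hgn, hk]
    exact nrm_rho_le hd0 hS ρ hK1 hKS g
  have hkinv : (k⁻¹ : Matrix (Fin d) (Fin d) ℝ) = ((ρ g⁻¹ : Matrix (Fin d) (Fin d) ℝ)) := by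
    rw [hk, _root_.map_inv, ← Matrix.coe_units_inv]
  have hnki : nrm (k⁻¹ : Matrix (Fin d) (Fin d) ℝ) ≤ Knrm ^ n := by
    rw [hkinv, ← hgn, ← wordLength_inv hS g]
    exact nrm_rho_le hd0 hS ρ hK1 hKS g⁻¹
  -- distance bound
  have hC0 : (0:ℝ) < C := by linarith
  have hKn0 : (0:ℝ) < Knrm ^ n := pow_pos (by linarith) n
  have hexp0 : (0:ℝ) < Real.exp (-lam * (wordLength S γ : ℝ)) := Real.exp_pos _
  have hDle : grDist P Q ≤ 2 * (C * Real.exp (-lam * (wordLength S γ : ℝ))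
      * (Knrm ^ n * Knrm ^ n)) := by
    have h1 := grDist_Uspace_le hAu hku hp1 (by omega) hgapA hgapB
    rw [← hBk] at h1
    refine h1.trans ?_
    have hratio := hdom γ
    have hq1 : 0 ≤ sv A (p + 1) / sv A p :=
      div_nonneg (sv_nonneg _ (by omega) (by omega)) (sv_pos hd0 hAu hp1 (by omega)).le
    have hm : nrm k * nrm (k⁻¹ : Matrix (Fin d) (Fin d) ℝ) ≤ Knrm ^ n * Knrm ^ n :=
      mul_le_mul hnk hnki (nrm_nonneg _) hKn0.le
    have hfull : sv A (p + 1) / sv A p * (nrm k * nrm (k⁻¹ : Matrix (Fin d) (Fin d) ℝ))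
        ≤ C * Real.exp (-lam * (wordLength S γ : ℝ)) * (Knrm ^ n * Knrm ^ n) := by
      apply mul_le_mul hratio hm (mul_nonneg (nrm_nonneg _) (nrm_nonneg _)) (by positivity)
    linarith
  -- logarithmic estimate
  have hlog : Real.log (grDist P Q) ≤ Real.log 2 + Real.log C
      + (-lam * (wordLength S γ : ℝ)) + 2 * (n : ℝ) * LK := by
    have h2 := Real.log_le_log hD0 hDle
    have e1 : Real.log (2 * (C * Real.exp (-lam * (wordLength S γ : ℝ))
        * (Knrm ^ n * Knrm ^ n))) = Real.log 2
        + Real.log (C * Real.exp (-lam * (wordLength S γ : ℝ)) * (Knrm ^ n * Knrm ^ n)) :=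
      Real.log_mul (by norm_num) (by positivity)
    have e2 : Real.log (C * Real.exp (-lam * (wordLength S γ : ℝ)) * (Knrm ^ n * Knrm ^ n))
        = Real.log (C * Real.exp (-lam * (wordLength S γ : ℝ)))
          + Real.log (Knrm ^ n * Knrm ^ n) :=
      Real.log_mul (by positivity) (by positivity)
    have e3 : Real.log (C * Real.exp (-lam * (wordLength S γ : ℝ)))
        = Real.log C + (-lam * (wordLength S γ : ℝ)) := by
      rw [Real.log_mul hC0.ne' (Real.exp_pos _).ne', Real.log_exp]
    have e4 : Real.log (Knrm ^ n * Knrm ^ n) = 2 * (n : ℝ) * LK := by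
      rw [Real.log_mul hKn0.ne' hKn0.ne', Real.log_pow, hLK]
      push_cast
      ring
    have h3 : Real.log (2 * (C * Real.exp (-lam * (wordLength S γ : ℝ))
        * (Knrm ^ n * Knrm ^ n))) = Real.log 2 + Real.log C
        + (-lam * (wordLength S γ : ℝ)) + 2 * (n : ℝ) * LK := by
      rw [e1, e2, e3, e4]
      ring
    rw [h3] at h2
    exact h2
  -- final arithmetic
  set x : ℝ := (wordLength S γ : ℝ) with hx
  set y : ℝ := (wordLength S η : ℝ) with hy
  have hx0 : 0 ≤ x := by rw [hx]; positivity
  have hn0 : 0 ≤ (n : ℝ) := by positivity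
  have hyx : y ≤ x + (n : ℝ) := by
    have h1 := wordLength_mul_le hS γ g
    rw [show γ * g = η by rw [hg]; group, hgn] at h1
    rw [hx, hy]
    exact_mod_cast h1
  have habs : -Real.log (grDist P Q) ≤ |Real.log (grDist P Q)| := neg_le_abs _
  have hlog2C : Real.log 2 + Real.log C = Real.log (2 * C) :=
    (Real.log_mul (by norm_num) hC0.ne').symm
  have hlamx : lam * x ≤ |Real.log (grDist P Q)| + Real.log (2 * C) + 2 * (n : ℝ) * LK := by
    rw [← hlog2C]
    rw [hx] at *
    linarith [hlog, habs]
  have hcoef : ν + 2 * c₁ * LK ≤ 1 := by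
    have h2 : ν + 2 * c₁ * LK = c₁ * (lam / 2 + 2 * LK) := by rw [hν]; ring
    rw [h2, ← hc₁T]
    apply mul_le_mul_of_nonneg_left _ hc₁0.le
    rw [hT]; linarith
  have key1 : ν * (x + y) ≤ 2 * ν * x + ν * (n : ℝ) := by
    have h5 : ν * y ≤ ν * (x + (n : ℝ)) := mul_le_mul_of_nonneg_left hyx hν0.le
    have h6 : ν * (x + y) = ν * x + ν * y := by ring
    have h7 : ν * (x + (n : ℝ)) = ν * x + ν * (n : ℝ) := by ring
    linarith [h5, h6.le, h7.le]
  have key2 : 2 * ν * x = c₁ * (lam * x) := by rw [hν]; ring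
  have key3 : c₁ * (lam * x) ≤ c₁ * |Real.log (grDist P Q)|
      + c₁ * Real.log (2 * C) + 2 * c₁ * LK * (n : ℝ) := by
    have h4 := mul_le_mul_of_nonneg_left hlamx hc₁0.le
    have h5 : c₁ * (|Real.log (grDist P Q)| + Real.log (2 * C) + 2 * (n : ℝ) * LK)
        = c₁ * |Real.log (grDist P Q)| + c₁ * Real.log (2 * C)
          + 2 * c₁ * LK * (n : ℝ) := by ring
    linarith [h4, h5.le]
  have key4 : (ν + 2 * c₁ * LK) * (n : ℝ) ≤ 1 * (n : ℝ) :=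
    mul_le_mul_of_nonneg_right hcoef hn0
  have key4' : ν * (n : ℝ) + 2 * c₁ * LK * (n : ℝ) ≤ (n : ℝ) := by
    have h8 : (ν + 2 * c₁ * LK) * (n : ℝ) = ν * (n : ℝ) + 2 * c₁ * LK * (n : ℝ) := by ring
    linarith [key4, h8.le]
  linarith [key1, key2.le, key3, key4']

end Paper
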